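/- Let N be a reticulation-visible network and let C be a big tree node component of N (i.e., C has at least two nodes). Then either C contains a leaf of N, or there exists a reticulation node r of N all of whose parents lie in C. -/

import Mathlib

/-!
Framework for rooted phylogenetic networks, formalized as directed graphs
given by an adjacency relation `A : V → V → Prop` on a vertex type `V`,
with a distinguished root `ρ`.  Leaves are identified with their (unique)
labels, i.e. the labelling is the identity on leaf vertices.
-/

namespace PhyloNet

variable {V : Type} {W : Type}

/-- Indegree of a vertex. -/
noncomputable def inDeg (A : V → V → Prop) (v : V) : ℕ := {u | A u v}.ncard

/-- Outdegree of a vertex. -/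
noncomputable def outDeg (A : V → V → Prop) (v : V) : ℕ := {w | A v w}.ncard

/-- `p` is a directed path (walk) from `u` to `v`, given as the list of its vertices. -/
def IsPath (A : V → V → Prop) (u v : V) (p : List V) : Prop :=
  p.Chain' A ∧ p.head? = some u ∧ p.getLast? = some v

/-- `A` with root `ρ` is a phylogenetic network: a finite rooted acyclic digraph whose
root has indegree 0 and outdegree ≥ 2, from which every node is reachable, and in which
every non-root node is either a leaf (indegree 1, outdegree 0), an internal tree node
(indegree 1, outdegree ≥ 2) or a reticulation (indegree ≥ 2, outdegree 1). -/
structure IsNetwork (A : V → V → Prop) (ρ : V) : Prop where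
  finite : Finite V
  acyclic : ∀ v, ¬ Relation.TransGen A v v
  root_indeg : inDeg A ρ = 0
  root_outdeg : 2 ≤ outDeg A ρ
  reach_from_root : ∀ v, Relation.ReflTransGen A ρ v
  degree_cond : ∀ v, v ≠ ρ →
    (inDeg A v = 1 ∧ (outDeg A v = 0 ∨ 2 ≤ outDeg A v)) ∨ (2 ≤ inDeg A v ∧ outDeg A v = 1)

/-- Reticulation node: indegree ≥ 2 and outdegree 1. -/
def IsRet (A : V → V → Prop) (v : V) : Prop := 2 ≤ inDeg A v ∧ outDeg A v = 1

/-- Leaf: indegree 1 and outdegree 0. -/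
def IsLeaf (A : V → V → Prop) (v : V) : Prop := inDeg A v = 1 ∧ outDeg A v = 0

/-- Tree node: any node that is not a reticulation node. -/
def IsTreeNode (A : V → V → Prop) (v : V) : Prop := ¬ IsRet A v

/-- `u` is visible on `v`: every directed path from the root `ρ` to `v` contains `u`. -/
def Visible (A : V → V → Prop) (ρ u v : V) : Prop := ∀ p, IsPath A ρ v p → u ∈ p

/-- A network is reticulation-visible if every reticulation node is visible on some leaf. -/
def RetVisible (A : V → V → Prop) (ρ : V) : Prop :=
  ∀ r, IsRet A r → ∃ ℓ, IsLeaf A ℓ ∧ Visible A ρ r ℓ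

/-- Undirected adjacency in the subgraph `N − R(N)` induced on tree nodes. -/
def TAdj (A : V → V → Prop) (u v : V) : Prop :=
  IsTreeNode A u ∧ IsTreeNode A v ∧ (A u v ∨ A v u)

/-- `S` is a tree node component: a connected component (ignoring directions) of the
subgraph induced on the tree nodes. -/
def IsTNC (A : V → V → Prop) (S : Set V) : Prop :=
  ∃ u, IsTreeNode A u ∧ S = {v | Relation.ReflTransGen (TAdj A) u v}

/-- `r` is the root of the tree node component `S`: it lies in `S` and has indegree 0
within `N − R(N)`, i.e. it has no tree-node parent. -/
def CompRoot (A : V → V → Prop) (S : Set V) (r : V) : Prop :=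
  r ∈ S ∧ ∀ u, IsTreeNode A u → ¬ A u r

/-- Tree node component `C'` is below tree node component `C''`. -/
def Below (A : V → V → Prop) (C' C'' : Set V) : Prop :=
  ∃ r, IsRet A r ∧ (∃ c, A r c ∧ CompRoot A C' c) ∧ (∃ p ∈ C'', A p r)

/-- A big tree node component: a tree node component with at least two nodes. -/
def BigTNC (A : V → V → Prop) (C : Set V) : Prop :=
  IsTNC A C ∧ ∃ a ∈ C, ∃ b ∈ C, a ≠ b

/-- A single-leaf component: its node set is `{ℓ}` for some leaf `ℓ`. -/
def SingleLeafTNC (A : V → V → Prop) (C : Set V) : Prop :=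
  ∃ ℓ, IsLeaf A ℓ ∧ C = {ℓ}

/-- A lowest big tree node component: a big tree node component `C` such that every
tree node component whose root is a proper descendant of the root of `C` is a
single-leaf component. -/
def LowestBig (A : V → V → Prop) (C : Set V) : Prop :=
  BigTNC A C ∧ ∀ C' r' rC, IsTNC A C' → CompRoot A C' r' → CompRoot A C rC →
    Relation.TransGen A rC r' → SingleLeafTNC A C'

/-- An inner reticulation: all of its parents lie in one and the same tree node component. -/
def InnerRet (A : V → V → Prop) (r : V) : Prop :=
  IsRet A r ∧ ∃ S, IsTNC A S ∧ ∀ p, A p r → p ∈ S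

/-- `IR(C)`: reticulations all of whose parents lie in `C`. -/
def IRset (A : V → V → Prop) (C : Set V) : Set V :=
  {r | IsRet A r ∧ ∀ p, A p r → p ∈ C}

/-- `CR(C)`: reticulations with at least one parent in `C` and at least one parent outside `C`. -/
def CRset (A : V → V → Prop) (C : Set V) : Set V :=
  {r | IsRet A r ∧ (∃ p, A p r ∧ p ∈ C) ∧ (∃ p, A p r ∧ p ∉ C)}

/-- `L_C`: the leaves of the network lying in `C` together with the children of the
inner reticulations below `C`. -/
def LCset (A : V → V → Prop) (C : Set V) : Set V :=
  {ℓ | ℓ ∈ C ∧ IsLeaf A ℓ} ∪ {x | ∃ r ∈ IRset A C, A r x}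

/-- Bicombining: every reticulation node has indegree exactly 2. -/
def Bicombining (A : V → V → Prop) : Prop := ∀ r, IsRet A r → inDeg A r = 2

/-- Galled: every reticulation node `r` has an ancestor `u` admitting two
internal-node-disjoint directed paths from `u` to `r` in which every node other
than `r` is a tree node. -/
def Galled (A : V → V → Prop) : Prop :=
  ∀ r, IsRet A r → ∃ u, Relation.TransGen A u r ∧ ∃ p₁ p₂ : List V,
    IsPath A u r p₁ ∧ IsPath A u r p₂ ∧ p₁ ≠ p₂ ∧
    (∀ x, x ∈ p₁ → x ∈ p₂ → x = u ∨ x = r) ∧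
    (∀ x ∈ p₁, x ≠ r → IsTreeNode A x) ∧ (∀ x ∈ p₂, x ≠ r → IsTreeNode A x)

/-- Restriction of a digraph to a vertex subset. -/
def Restrict (A : V → V → Prop) (S : Set V) : V → V → Prop :=
  fun a b => a ∈ S ∧ b ∈ S ∧ A a b

/-- Descendants of `u` (including `u`); the vertex set of the subnetwork `D_N(u)`. -/
def Desc (A : V → V → Prop) (u : V) : Set V := {v | Relation.ReflTransGen A u v}

/-- Binary network: the root has outdegree 2, leaves have degree 1, and every other
node has total degree 3. -/
def IsBinary (A : V → V → Prop) (ρ : V) : Prop :=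
  outDeg A ρ = 2 ∧ ∀ v, v ≠ ρ →
    (inDeg A v = 1 ∧ outDeg A v = 0) ∨ (inDeg A v = 1 ∧ outDeg A v = 2) ∨
    (inDeg A v = 2 ∧ outDeg A v = 1)

/-- A phylogenetic tree: a network with no reticulation nodes. -/
def IsPhyloTree (A : W → W → Prop) (ρ : W) : Prop :=
  IsNetwork A ρ ∧ ∀ w, ¬ IsRet A w

/-- A node with indegree 1 and outdegree 1 (a suppressible node). -/
def Deg11 (A : V → V → Prop) (v : V) : Prop := inDeg A v = 1 ∧ outDeg A v = 1

/-- There is a directed path from `a` to `b` (of length ≥ 1) all of whose internal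
nodes are suppressible. -/
def SubdivPath (A : V → V → Prop) (a b : V) : Prop :=
  ∃ p : List V, IsPath A a b p ∧ 2 ≤ p.length ∧ ∀ z ∈ p, z ≠ a → z ≠ b → Deg11 A z

/-- `φ` witnesses that the digraph `A'` on the vertex set `S` is a subdivision of the
tree `AT` restricted to the vertex set `SW`: `φ` injectively maps the tree nodes onto
the non-suppressible nodes, edges of the tree correspond exactly to directed paths
whose internal nodes are suppressible, and leaves are mapped according to the leaf
correspondence `θ` (same labels). -/
def SubdivWitness (A' : V → V → Prop) (S : Set V) (AT : W → W → Prop) (SW : Set W)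
    (θ : W → V) (φ : W → V) : Prop :=
  Set.InjOn φ SW ∧ (∀ w ∈ SW, φ w ∈ S) ∧
  (∀ x ∈ S, ¬ Deg11 (Restrict A' S) x → ∃ w ∈ SW, φ w = x) ∧
  (∀ x ∈ SW, ∀ y ∈ SW, (Restrict AT SW x y ↔ SubdivPath (Restrict A' S) (φ x) (φ y))) ∧
  (∀ w ∈ SW, outDeg (Restrict AT SW) w = 0 → φ w = θ w)

/-- The digraph `A'` on vertex set `S` is a subdivision of the tree `AT` on `SW`. -/
def IsSubdivisionOf (A' : V → V → Prop) (S : Set V) (AT : W → W → Prop) (SW : Set W)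
    (θ : W → V) : Prop :=
  ∃ φ, SubdivWitness A' S AT SW θ φ

/-- `E`, `D`, `φ` witness that the subnetwork of `A` on vertex set `S` displays the
subtree of `AT` on vertex set `SW`: `E` is a set of reticulation edges of the
subnetwork containing all but one of the incoming edges of each reticulation node of
the subnetwork, `D` is a set of deleted nodes, and `φ` witnesses that the result is a
subdivision of the subtree. -/
def DisplayWitness (A : V → V → Prop) (S : Set V) (AT : W → W → Prop) (SW : Set W)
    (θ : W → V) (E : Set (V × V)) (D : Set V) (φ : W → V) : Prop :=
  (∀ e ∈ E, Restrict A S e.1 e.2 ∧ 2 ≤ inDeg (Restrict A S) e.2) ∧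
  (∀ r ∈ S, 2 ≤ inDeg (Restrict A S) r →
     ∃ p, Restrict A S p r ∧ (p, r) ∉ E ∧ ∀ q, Restrict A S q r → q ≠ p → (q, r) ∈ E) ∧
  SubdivWitness (fun a b => Restrict A S a b ∧ (a, b) ∉ E) (S \ D) AT SW θ φ

/-- The subnetwork of `A` on vertex set `S` displays the subtree of `AT` on `SW`. -/
def DisplaysOn (A : V → V → Prop) (S : Set V) (AT : W → W → Prop) (SW : Set W)
    (θ : W → V) : Prop :=
  ∃ E D φ, DisplayWitness A S AT SW θ E D φ

/-- The leaves of the subnetwork of `A` induced on vertex set `S`. -/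
def SubLeaves (A : V → V → Prop) (S : Set V) : Set V :=
  {v | v ∈ S ∧ outDeg (Restrict A S) v = 0}

/-- `B` is a soft cluster in the subnetwork of `A` on vertex set `S`: `B` is the
cluster of some node of some phylogenetic tree displayed by that subnetwork. -/
def SoftClusterOn (A : V → V → Prop) (S : Set V) (B : Set V) : Prop :=
  ∃ (W : Type) (AT : W → W → Prop) (ρT : W) (θ : W → V),
    IsPhyloTree AT ρT ∧
    Set.BijOn θ {w | IsLeaf AT w} (SubLeaves A S) ∧
    DisplaysOn A S AT Set.univ θ ∧
    ∃ x : W, θ '' {w | IsLeaf AT w ∧ Relation.ReflTransGen AT x w} = B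

/-- `B` is a soft cluster of the node `u` of `N`: there are `E` and `D` as in the
definition of display such that `u` is a node of `(N − E) − D` and the set of leaves
of `N` below `u` in `(N − E) − D` equals `B`. -/
def SoftClusterAt (A : V → V → Prop) (u : V) (B : Set V) : Prop :=
  ∃ (E : Set (V × V)) (D : Set V),
    (∀ e ∈ E, A e.1 e.2 ∧ 2 ≤ inDeg A e.2) ∧
    (∀ r, 2 ≤ inDeg A r → ∃ p, A p r ∧ (p, r) ∉ E ∧ ∀ q, A q r → q ≠ p → (q, r) ∈ E) ∧
    (∃ (W : Type) (AT : W → W → Prop) (ρT : W) (θ : W → V),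
      IsPhyloTree AT ρT ∧ Set.BijOn θ {w | IsLeaf AT w} {v | IsLeaf A v} ∧
      IsSubdivisionOf (fun a b => A a b ∧ (a, b) ∉ E) (Set.univ \ D) AT Set.univ θ) ∧
    u ∉ D ∧
    {ℓ | IsLeaf A ℓ ∧
      Relation.ReflTransGen (fun a b => A a b ∧ (a, b) ∉ E ∧ a ∉ D ∧ b ∉ D) u ℓ} = B

/-- `w` is the lowest common ancestor of the set `X` in the (tree-like) digraph `A`. -/
def IsLCAIn (A : V → V → Prop) (X : Set V) (w : V) : Prop :=
  (∀ x ∈ X, Relation.ReflTransGen A w x) ∧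
  ∀ w', (∀ x ∈ X, Relation.ReflTransGen A w' x) → Relation.ReflTransGen A w' w

end PhyloNet


namespace PhyloNet

private lemma reach_of_mem_chain {V : Type} {A : V → V → Prop} :
    ∀ (p : List V) (y v : V), p.Chain' A → p.getLast? = some y → v ∈ p →
      Relation.ReflTransGen A v y := by
  intro p
  induction p with
  | nil => intro y v _ _ hv; simp at hv
  | cons c t ih =>
    intro y v hc hl hv
    cases t with
    | nil =>
      simp only [List.getLast?_singleton, Option.some.injEq] at hl
      simp only [List.mem_singleton] at hv
      subst hl; subst hv
      exact Relation.ReflTransGen.refl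
    | cons d t' =>
      simp only [List.Chain', List.isChain_cons_cons] at hc
      rw [List.getLast?_cons_cons] at hl
      rcases List.mem_cons.mp hv with h | h
      · subst h
        exact Relation.ReflTransGen.head hc.1 (ih y d hc.2 hl (List.mem_cons_self))
      · exact ih y v hc.2 hl h

private lemma exists_isPath {V : Type} {A : V → V → Prop} {x y : V}
    (h : Relation.ReflTransGen A x y) : ∃ p : List V, IsPath A x y p := by
  induction h using Relation.ReflTransGen.head_induction_on with
  | refl => exact ⟨[y], List.isChain_singleton y, rfl, by simp⟩
  | @head u c huc hcy ih =>
    obtain ⟨p, hc, hh, hl⟩ := ih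
    cases p with
    | nil => simp at hh
    | cons c' t =>
      simp only [List.head?_cons, Option.some.injEq] at hh
      subst hh
      exact ⟨u :: c' :: t, List.isChain_cons_cons.mpr ⟨huc, hc⟩, rfl,
        by rw [List.getLast?_cons_cons]; exact hl⟩

private lemma exists_isPath_avoid {V : Type} {A : V → V → Prop} {a x y : V}
    (h : Relation.ReflTransGen (fun u v => A u v ∧ u ≠ a ∧ v ≠ a) x y) :
    ∃ p : List V, IsPath A x y p ∧ ∀ z ∈ p, z = x ∨ z ≠ a := by
  induction h using Relation.ReflTransGen.head_induction_on with
  | refl =>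
    refine ⟨[y], ⟨List.isChain_singleton y, rfl, by simp⟩, ?_⟩
    intro z hz
    simp only [List.mem_singleton] at hz
    exact Or.inl hz
  | @head u c huc hcy ih =>
    obtain ⟨p, ⟨hc, hh, hl⟩, hmem⟩ := ih
    cases p with
    | nil => simp at hh
    | cons c' t =>
      simp only [List.head?_cons, Option.some.injEq] at hh
      subst hh
      refine ⟨u :: c' :: t, ⟨List.isChain_cons_cons.mpr ⟨huc.1, hc⟩, rfl,
        by rw [List.getLast?_cons_cons]; exact hl⟩, ?_⟩
      intro z hz
      rcases List.mem_cons.mp hz with h | h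
      · exact Or.inl h
      · rcases hmem z h with h' | h'
        · subst h'; exact Or.inr huc.2.2
        · exact Or.inr h'

private lemma reach_avoid_right {V : Type} {A : V → V → Prop} {a x y : V}
    (h : Relation.ReflTransGen A x y) (hay : ¬ Relation.ReflTransGen A a y) :
    Relation.ReflTransGen (fun u v => A u v ∧ u ≠ a ∧ v ≠ a) x y := by
  induction h using Relation.ReflTransGen.head_induction_on with
  | refl => exact Relation.ReflTransGen.refl
  | @head u c huc hcy ih =>
    have hu : u ≠ a := fun he => hay (he ▸ Relation.ReflTransGen.head huc hcy)
    have hc2 : c ≠ a := fun he => hay (he ▸ hcy)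
    exact Relation.ReflTransGen.head ⟨huc, hu, hc2⟩ ih

private lemma reach_avoid_left {V : Type} {A : V → V → Prop} {a x y : V}
    (h : Relation.ReflTransGen A x y) (hxa : ¬ Relation.ReflTransGen A x a) :
    Relation.ReflTransGen (fun u v => A u v ∧ u ≠ a ∧ v ≠ a) x y := by
  induction h with
  | refl => exact Relation.ReflTransGen.refl
  | @tail b c hxb hbc ih =>
    have hb : b ≠ a := fun he => hxa (he ▸ hxb)
    have hc2 : c ≠ a := fun he => hxa (he ▸ Relation.ReflTransGen.tail hxb hbc)
    exact Relation.ReflTransGen.tail ih ⟨hbc, hb, hc2⟩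

private lemma exit_lemma {V : Type} {A : V → V → Prop} {C : Set V}
    (hclosed : ∀ v w, v ∈ C → ¬ IsRet A w → A v w → w ∈ C) :
    ∀ {x y : V}, x ∈ C → y ∉ C → Relation.ReflTransGen A x y →
      ∃ r, IsRet A r ∧ (∃ p ∈ C, A p r) ∧ Relation.ReflTransGen A x r ∧
        Relation.ReflTransGen A r y := by
  intro x y hx hy h
  revert hx
  induction h using Relation.ReflTransGen.head_induction_on with
  | refl => intro hx; exact absurd hx hy
  | @head u c huc hcy ih =>
    intro hu
    by_cases hret : IsRet A c
    · exact ⟨c, hret, ⟨u, hu, huc⟩, Relation.ReflTransGen.single huc, hcy⟩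
    · obtain ⟨r, h1, h2, h3, h4⟩ := ih (hclosed u c hu hret huc)
      exact ⟨r, h1, h2, Relation.ReflTransGen.head huc h3, h4⟩

private lemma main_aux {V : Type} {A : V → V → Prop} {ρ : V} (hN : IsNetwork A ρ)
    (hRV : RetVisible A ρ) (C : Set V) (hne : C.Nonempty)
    (hCtree : ∀ v ∈ C, IsTreeNode A v)
    (hclosed1 : ∀ v w, v ∈ C → ¬ IsRet A w → A v w → w ∈ C)
    (hclosed2 : ∀ v w, v ∈ C → ¬ IsRet A w → A w v → w ∈ C)
    (hnoleaf : ∀ ℓ ∈ C, ¬ IsLeaf A ℓ)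
    (hcross : ∀ r, IsRet A r → ∃ p, A p r ∧ p ∉ C) : False := by
  classical
  haveI : Finite V := hN.finite
  haveI : IsTrans V (Relation.TransGen A) := ⟨fun _ _ _ h1 h2 => h1.trans h2⟩
  haveI : IsIrrefl V (Relation.TransGen A) := ⟨hN.acyclic⟩
  have hwf : WellFounded (Relation.TransGen A) := Finite.wellFounded_of_trans_of_irrefl _
  have hleaf : ∃ m, IsLeaf A m := by
    have hwfr : WellFounded (fun x y : V => Relation.TransGen A y x) := by
      haveI : IsTrans V (fun x y : V => Relation.TransGen A y x) :=
        ⟨fun _ _ _ h1 h2 => h2.trans h1⟩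
      haveI : IsIrrefl V (fun x y : V => Relation.TransGen A y x) := ⟨hN.acyclic⟩
      exact Finite.wellFounded_of_trans_of_irrefl _
    obtain ⟨m, -, hm⟩ := hwfr.has_min Set.univ ⟨ρ, trivial⟩
    have hout : outDeg A m = 0 := by
      have hset : {w | A m w} = (∅ : Set V) := by
        ext w
        simp only [Set.mem_setOf_eq, Set.mem_empty_iff_false, iff_false]
        exact fun hw => hm w trivial (Relation.TransGen.single hw)
      unfold outDeg
      rw [hset]
      exact Set.ncard_empty V
    have hmρ : m ≠ ρ := by
      intro he
      have h2 := hN.root_outdeg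
      rw [he] at hout
      omega
    rcases hN.degree_cond m hmρ with ⟨h1, h2 | h2⟩ | ⟨-, h2⟩
    · exact ⟨m, h1, h2⟩
    · omega
    · omega
  by_cases hρC : ρ ∈ C
  · obtain ⟨ℓ0, hℓ0⟩ := hleaf
    have hℓ0C : ℓ0 ∉ C := fun h => hnoleaf ℓ0 h hℓ0
    obtain ⟨r1, hr1, hp1, -, -⟩ := exit_lemma hclosed1 hρC hℓ0C (hN.reach_from_root ℓ0)
    obtain ⟨m, hmR, hmin⟩ := hwf.has_min {r | IsRet A r ∧ ∃ p ∈ C, A p r} ⟨r1, hr1, hp1⟩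
    obtain ⟨q, hqm, hqC⟩ := hcross m hmR.1
    obtain ⟨r', hr', hp', -, hr'q⟩ := exit_lemma hclosed1 hρC hqC (hN.reach_from_root q)
    exact hmin r' ⟨hr', hp'⟩ (Relation.TransGen.tail' hr'q hqm)
  · obtain ⟨rC, hrCC, hrCmin⟩ := hwf.has_min C hne
    have hrtree : IsTreeNode A rC := hCtree rC hrCC
    have hrCρ : rC ≠ ρ := fun he => hρC (he ▸ hrCC)
    have hin1 : {u | A u rC}.ncard = 1 := by
      rcases hN.degree_cond rC hrCρ with ⟨h1, -⟩ | h2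
      · exact h1
      · exact absurd h2 hrtree
    obtain ⟨a, hpar⟩ := Set.ncard_eq_one.mp hin1
    have haprC : A a rC := by
      have ha : a ∈ {u | A u rC} := by rw [hpar]; exact rfl
      exact ha
    have haret : IsRet A a := by
      by_contra h
      exact hrCmin a (hclosed2 rC a hrCC h haprC) (Relation.TransGen.single haprC)
    obtain ⟨c0, hch⟩ := Set.ncard_eq_one.mp haret.2
    have hchild : ∀ w, A a w → w = rC := by
      intro w hw
      have h1 : w ∈ {w' | A a w'} := hw
      have h2 : rC ∈ {w' | A a w'} := haprC
      rw [hch, Set.mem_singleton_iff] at h1 h2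
      exact h1.trans h2.symm
    have haρ : a ≠ ρ := by
      intro he
      have h1 := haret.1
      rw [he, hN.root_indeg] at h1
      omega
    have habove : ∀ r, Relation.ReflTransGen A rC r → Relation.TransGen A a r :=
      fun r h => Relation.TransGen.head' haprC h
    obtain ⟨ℓ, hℓleaf, hvis⟩ := hRV a haret
    have hℓC : ℓ ∉ C := fun h => hnoleaf ℓ h hℓleaf
    obtain ⟨p0, hp0⟩ := exists_isPath (hN.reach_from_root ℓ)
    have haℓ : Relation.ReflTransGen A a ℓ :=
      reach_of_mem_chain p0 ℓ a hp0.1 hp0.2.2 (hvis p0 hp0)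
    have haℓne : a ≠ ℓ := by
      intro he
      have h1 := haret.2
      have h2 := hℓleaf.2
      rw [he] at h1
      omega
    have hrCℓ : Relation.ReflTransGen A rC ℓ := by
      rcases Relation.ReflTransGen.cases_head haℓ with h | ⟨w, hw1, hw2⟩
      · exact absurd h haℓne
      · rwa [hchild w hw1] at hw2
    obtain ⟨r0, hr0ret, hr0p, hrCr0, hr0ℓ⟩ := exit_lemma hclosed1 hrCC hℓC hrCℓ
    have claim : ∀ r, IsRet A r → (∃ p ∈ C, A p r) → Relation.ReflTransGen A rC r →
        Relation.ReflTransGen (fun u v => A u v ∧ u ≠ a ∧ v ≠ a) ρ r := by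
      intro r
      refine hwf.induction (C := fun s => IsRet A s → (∃ p ∈ C, A p s) →
        Relation.ReflTransGen A rC s →
        Relation.ReflTransGen (fun u v => A u v ∧ u ≠ a ∧ v ≠ a) ρ s) r ?_
      intro s ih hsret hsp hrCs
      obtain ⟨q, hqs, hqC⟩ := hcross s hsret
      have hsa : s ≠ a := fun he => hN.acyclic a (he ▸ habove s hrCs)
      by_cases haq : Relation.ReflTransGen A a q
      · have hqa : q ≠ a := by
          intro he
          subst he
          have hs : s = rC := hchild s hqs
          exact hrtree (hs ▸ hsret)
        have hrCq : Relation.ReflTransGen A rC q := by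
          rcases Relation.ReflTransGen.cases_head haq with h | ⟨w, hw1, hw2⟩
          · exact absurd h.symm hqa
          · rwa [hchild w hw1] at hw2
        obtain ⟨r', hr'ret, hr'p, hrCr', hr'q⟩ := exit_lemma hclosed1 hrCC hqC hrCq
        have hchain := ih r' (Relation.TransGen.tail' hr'q hqs) hr'ret hr'p hrCr'
        have hna : ¬ Relation.ReflTransGen A r' a :=
          fun hh => hN.acyclic a (Relation.TransGen.trans_left (habove r' hrCr') hh)
        exact Relation.ReflTransGen.tail (hchain.trans (reach_avoid_left hr'q hna))
          ⟨hqs, hqa, hsa⟩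
      · have hqa : q ≠ a := by
          intro he
          subst he
          exact haq Relation.ReflTransGen.refl
        exact Relation.ReflTransGen.tail (reach_avoid_right (hN.reach_from_root q) haq)
          ⟨hqs, hqa, hsa⟩
    have hchain := claim r0 hr0ret hr0p hrCr0
    have hna : ¬ Relation.ReflTransGen A r0 a :=
      fun hh => hN.acyclic a (Relation.TransGen.trans_left (habove r0 hrCr0) hh)
    obtain ⟨p, hp, hmem⟩ := exists_isPath_avoid (hchain.trans (reach_avoid_left hr0ℓ hna))
    rcases hmem a (hvis p hp) with h | h
    · exact haρ h
    · exact h rfl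

end PhyloNet

namespace PhyloNet

/-- In a reticulation-visible network, every big tree node component `C` either contains
a leaf of the network, or there is a reticulation node all of whose parents lie in
`C`. -/
theorem big_component_leaf_or_inner_ret {V : Type} (A : V → V → Prop) (ρ : V)
    (hN : IsNetwork A ρ) (hRV : RetVisible A ρ)
    (C : Set V) (hC : BigTNC A C) :
    (∃ ℓ ∈ C, IsLeaf A ℓ) ∨ ∃ r, IsRet A r ∧ ∀ p, A p r → p ∈ C := by
  classical
  by_contra hcon
  push_neg at hcon
  obtain ⟨hnoleaf, hcross⟩ := hcon
  obtain ⟨⟨u0, hu0t, hCeq⟩, -⟩ := hC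
  subst hCeq
  have hCtree : ∀ v ∈ {v | Relation.ReflTransGen (TAdj A) u0 v}, IsTreeNode A v := by
    intro v hv
    simp only [Set.mem_setOf_eq] at hv
    induction hv with
    | refl => exact hu0t
    | tail _ h ih => exact h.2.1
  refine main_aux hN hRV {v | Relation.ReflTransGen (TAdj A) u0 v}
    ⟨u0, Relation.ReflTransGen.refl⟩ hCtree ?_ ?_ hnoleaf hcross
  · intro v w hv hw he
    exact Relation.ReflTransGen.tail hv ⟨hCtree v hv, hw, Or.inl he⟩
  · intro v w hv hw he
    exact Relation.ReflTransGen.tail hv ⟨hCtree v hv, hw, Or.inr he⟩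


end PhyloNet
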